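/- Let A = ℚ[a₁, a₂, …] be the polynomial ring in countably many variables, R = A[[q]], and consider in R[[z]] the series F_n(z) = 1 + ∑_{r≥1} a_r q^{nr} z^r for n ≥ 0. Then the infinite product ∏_{n≥0} F_n(z) converges coefficientwise (for each m, the coefficients of z^m of the partial products converge in the q-adic topology of R) to a series ∑_{m≥0} b_m z^m whose coefficients satisfy b₀ = 1 and (1 − q^m) b_m = ∑_{r=1}^{m} q^{m−r} a_r b_{m−r} for every m ≥ 1; since 1 − q^m is invertible in R, this recursion determines the b_m uniquely. Moreover each b_m is weighted homogeneous of degree m in the variables a_r when a_r is assigned degree r. -/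

import Mathlib

open PowerSeries

noncomputable section

/-- `A = ℚ[a₁, a₂, …]`: the variable `a_r` (for `r ≥ 1`) is `MvPolynomial.X (r-1)`. -/
abbrev A : Type := MvPolynomial ℕ ℚ

/-- `R = A[[q]]`. -/
abbrev R : Type := PowerSeries A

/-- `a_r = X (r-1) ∈ A`, of weighted degree `r` for the weight `i ↦ i + 1`. -/
def a (r : ℕ) : A := MvPolynomial.X (r - 1)

/-- `F_n(z) = 1 + ∑_{r≥1} a_r q^{nr} z^r ∈ R[[z]]`. -/
def Fser (n : ℕ) : PowerSeries R :=
  PowerSeries.mk fun r =>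
    if r = 0 then 1 else PowerSeries.C (R := A) (a r) * (PowerSeries.X : R) ^ (n * r)

namespace InfProdAux

/-- Partial product `P N = ∏_{n=0}^{N} F_n`. -/
def P (N : ℕ) : PowerSeries R := ∏ n ∈ Finset.range (N + 1), Fser n

/-- `c N m` is the coefficient of `z^m` in `P N`. -/
def c (N m : ℕ) : R := PowerSeries.coeff (R := R) m (P N)

/-- The candidate limit `b m`. -/
def b (m : ℕ) : R := PowerSeries.mk fun k => PowerSeries.coeff (R := A) k (c k m)

lemma coeff_b (k m : ℕ) : PowerSeries.coeff (R := A) k (b m) = PowerSeries.coeff (R := A) k (c k m) :=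
  PowerSeries.coeff_mk _ _

lemma range_eq_insert (m : ℕ) : Finset.range (m + 1) = insert 0 (Finset.Icc 1 m) := by
  ext x; simp; omega

/-- Key expansion: coefficient of `z^m` in `Fser n * g`. -/
lemma key (g : PowerSeries R) (n m : ℕ) :
    PowerSeries.coeff (R := R) m (Fser n * g) =
      PowerSeries.coeff (R := R) m g +
        ∑ r ∈ Finset.Icc 1 m,
          PowerSeries.C (R := A) (a r) * ((PowerSeries.X : R) ^ (n * r) * PowerSeries.coeff (R := R) (m - r) g) := by
  rw [PowerSeries.coeff_mul, Finset.Nat.sum_antidiagonal_eq_sum_range_succ_mk,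
    range_eq_insert, Finset.sum_insert (by simp)]
  congr 1
  · simp [Fser]
  · refine Finset.sum_congr rfl fun r hr => ?_
    have hr0 : r ≠ 0 := by simp only [Finset.mem_Icc] at hr; omega
    simp only [Fser, PowerSeries.coeff_mk, if_neg hr0]
    ring

lemma Fser_succ (n : ℕ) : Fser (n + 1) = PowerSeries.rescale (PowerSeries.X : R) (Fser n) := by
  ext r
  rw [PowerSeries.coeff_rescale]
  simp only [Fser, PowerSeries.coeff_mk]
  rcases eq_or_ne r 0 with rfl | hr
  · simp
  · rw [if_neg hr, if_neg hr, add_mul, one_mul, pow_add]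
    ring

lemma P_succ (N : ℕ) :
    P (N + 1) = Fser 0 * PowerSeries.rescale (PowerSeries.X : R) (P N) := by
  unfold P
  rw [Finset.prod_range_succ' (fun n => Fser n) (N + 1)]
  simp_rw [Fser_succ]
  rw [← map_prod (PowerSeries.rescale (PowerSeries.X : R)) (fun n => Fser n) (Finset.range (N + 1))]
  ring

/-- The rescale expansion of `c (N+1) m`. -/
lemma c_succ (N m : ℕ) :
    c (N + 1) m =
      (PowerSeries.X : R) ^ m * c N m +
        ∑ r ∈ Finset.Icc 1 m,
          PowerSeries.C (R := A) (a r) * ((PowerSeries.X : R) ^ (m - r) * c N (m - r)) := by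
  unfold c
  rw [P_succ, key]
  simp only [Nat.zero_mul, pow_zero, one_mul, PowerSeries.coeff_rescale]

/-- The direct expansion of `c (N+1) m` (adds only high powers of `q`). -/
lemma c_succ' (N m : ℕ) :
    c (N + 1) m =
      c N m +
        ∑ r ∈ Finset.Icc 1 m,
          PowerSeries.C (R := A) (a r) * ((PowerSeries.X : R) ^ ((N + 1) * r) * c N (m - r)) := by
  unfold c
  show PowerSeries.coeff (R := R) m (∏ n ∈ Finset.range (N + 1 + 1), Fser n) = _
  rw [Finset.prod_range_succ, mul_comm, key]
  rfl

lemma stab {k N : ℕ} (h : k ≤ N) (m : ℕ) :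
    PowerSeries.coeff (R := A) k (c N m) = PowerSeries.coeff (R := A) k (c k m) := by
  induction N with
  | zero => obtain rfl := Nat.le_zero.mp h; rfl
  | succ N ih =>
    rcases Nat.eq_or_lt_of_le h with h' | h'
    · rw [h']
    · have hk : k ≤ N := by omega
      rw [c_succ', map_add, ← ih hk, add_eq_left,
        map_sum (PowerSeries.coeff (R := A) k) _ (Finset.Icc 1 m)]
      refine Finset.sum_eq_zero fun r hr => ?_
      have hr1 : 1 ≤ r := (Finset.mem_Icc.mp hr).1
      rw [PowerSeries.coeff_C_mul, PowerSeries.coeff_X_pow_mul', if_neg (by nlinarith), mul_zero]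

lemma stab_zero : ∀ k m : ℕ, k = 0 → PowerSeries.coeff (R := A) k (c 0 m) = PowerSeries.coeff (R := A) k (c k m) := by
  intro k m hk; rw [hk]

lemma coeff_b_eq {k N : ℕ} (h : k ≤ N) (m : ℕ) :
    PowerSeries.coeff (R := A) k (b m) = PowerSeries.coeff (R := A) k (c N m) := by
  rw [coeff_b, stab h]

/-- Replacing `c k` by `b` under a factor `X^j`. -/
lemma coeff_cb (k j s : ℕ) :
    PowerSeries.coeff (R := A) k ((PowerSeries.X : R) ^ j * c k s) =
      PowerSeries.coeff (R := A) k ((PowerSeries.X : R) ^ j * b s) := by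
  rw [PowerSeries.coeff_X_pow_mul', PowerSeries.coeff_X_pow_mul']
  split_ifs with h
  · rw [stab (Nat.sub_le k j), ← coeff_b]
  · rfl

lemma b_zero : b 0 = 1 := by
  ext k
  rw [coeff_b]
  have : c k 0 = 1 := by
    unfold c P
    rw [PowerSeries.coeff_zero_eq_constantCoeff, map_prod]
    refine Finset.prod_eq_one fun n _ => ?_
    rw [← PowerSeries.coeff_zero_eq_constantCoeff_apply]
    simp [Fser]
  rw [this]

lemma b_rec (m : ℕ) (hm : 1 ≤ m) :
    (1 - (PowerSeries.X : R) ^ m) * b m =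
      ∑ r ∈ Finset.Icc 1 m,
        (PowerSeries.X : R) ^ (m - r) * PowerSeries.C (R := A) (a r) * b (m - r) := by
  refine PowerSeries.ext fun k => ?_
  rw [sub_mul, one_mul, map_sub]
  have h1 : PowerSeries.coeff (R := A) k (b m) =
      PowerSeries.coeff (R := A) k ((PowerSeries.X : R) ^ m * c k m) +
        ∑ r ∈ Finset.Icc 1 m,
          PowerSeries.coeff (R := A) k
            (PowerSeries.C (R := A) (a r) * ((PowerSeries.X : R) ^ (m - r) * c k (m - r))) := by
    rw [coeff_b_eq (Nat.le_succ k), c_succ]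
    rw [map_add, map_sum (PowerSeries.coeff (R := A) k) _ (Finset.Icc 1 m)]
  rw [h1, coeff_cb, add_sub_cancel_left]
  rw [map_sum]
  refine Finset.sum_congr rfl fun r hr => ?_
  rw [PowerSeries.coeff_C_mul, coeff_cb, ← PowerSeries.coeff_C_mul]
  congr 1
  ring

lemma unit_one_sub_X_pow (m : ℕ) (hm : 1 ≤ m) :
    IsUnit (1 - (PowerSeries.X : R) ^ m) := by
  rw [PowerSeries.isUnit_iff_constantCoeff]
  have : PowerSeries.constantCoeff (R := A) ((1 : R) - (PowerSeries.X : R) ^ m) = 1 := by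
    rw [map_sub, map_pow, map_one, PowerSeries.constantCoeff_X,
      zero_pow (by omega), sub_zero]
  rw [this]
  exact isUnit_one

lemma homog (N : ℕ) : ∀ m k : ℕ,
    MvPolynomial.IsWeightedHomogeneous (fun i => i + 1)
      (PowerSeries.coeff (R := A) k (c N m)) m := by
  induction N with
  | zero =>
    intro m k
    have hc : c 0 m = PowerSeries.coeff (R := R) m (Fser 0) := by
      unfold c P
      rw [Finset.prod_range_one]
    rcases eq_or_ne m 0 with rfl | hm
    · have : c 0 0 = 1 := by simp [hc, Fser]
      rw [this]
      rcases eq_or_ne k 0 with rfl | hk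
      · simpa using MvPolynomial.isWeightedHomogeneous_one (R := ℚ) (fun i : ℕ => i + 1)
      · rw [PowerSeries.coeff_one, if_neg hk]
        exact MvPolynomial.isWeightedHomogeneous_zero _ _ _
    · have : c 0 m = PowerSeries.C (R := A) (a m) := by
        simp [hc, Fser, hm]
      rw [this, PowerSeries.coeff_C]
      split_ifs with hk
      · have := MvPolynomial.isWeightedHomogeneous_X ℚ (fun i : ℕ => i + 1) (m - 1)
        have hdeg : (m - 1) + 1 = m := by omega
        rw [hdeg] at this
        exact this
      · exact MvPolynomial.isWeightedHomogeneous_zero _ _ _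
  | succ N ih =>
    intro m k
    rw [c_succ, map_add, map_sum (PowerSeries.coeff (R := A) k) _ (Finset.Icc 1 m)]
    rw [← MvPolynomial.mem_weightedHomogeneousSubmodule]
    refine add_mem ?_ (Submodule.sum_mem _ fun r hr => ?_)
    · rw [MvPolynomial.mem_weightedHomogeneousSubmodule, PowerSeries.coeff_X_pow_mul']
      split_ifs with h
      · exact ih m _
      · exact MvPolynomial.isWeightedHomogeneous_zero _ _ _
    · rw [MvPolynomial.mem_weightedHomogeneousSubmodule, PowerSeries.coeff_C_mul,
        PowerSeries.coeff_X_pow_mul']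
      obtain ⟨hr1, hrm⟩ := Finset.mem_Icc.mp hr
      split_ifs with h
      · have ha : MvPolynomial.IsWeightedHomogeneous (fun i : ℕ => i + 1) (a r) r := by
          have := MvPolynomial.isWeightedHomogeneous_X ℚ (fun i : ℕ => i + 1) (r - 1)
          have hdeg : (r - 1) + 1 = r := by omega
          rw [hdeg] at this
          exact this
        have := ha.mul (ih (m - r) (k - (m - r)))
        have hdeg : r + (m - r) = m := by omega
        rw [hdeg] at this
        exact this
      · rw [mul_zero]
        exact MvPolynomial.isWeightedHomogeneous_zero _ _ _

end InfProdAux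

open InfProdAux

theorem infinite_product_recursion :
    ∃ b : ℕ → R,
      -- coefficientwise convergence of the partial products `∏_{n=0}^{N} F_n(z)` to `∑ b_m z^m`
      (∀ m k : ℕ, ∃ N₀ : ℕ, ∀ N : ℕ, N₀ ≤ N →
        PowerSeries.coeff (R := A) k
            (PowerSeries.coeff (R := R) m (∏ n ∈ Finset.range (N + 1), Fser n)) =
          PowerSeries.coeff (R := A) k (b m)) ∧
      b 0 = 1 ∧
      -- the recursion `(1 - q^m) b_m = ∑_{r=1}^{m} q^{m-r} a_r b_{m-r}`
      (∀ m : ℕ, 1 ≤ m →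
        (1 - (PowerSeries.X : R) ^ m) * b m =
          ∑ r ∈ Finset.Icc 1 m,
            (PowerSeries.X : R) ^ (m - r) * PowerSeries.C (R := A) (a r) * b (m - r)) ∧
      -- `1 - q^m` is invertible in `R`
      (∀ m : ℕ, 1 ≤ m → IsUnit (1 - (PowerSeries.X : R) ^ m)) ∧
      -- hence the recursion determines the `b_m` uniquely
      (∀ b' : ℕ → R, b' 0 = 1 →
        (∀ m : ℕ, 1 ≤ m →
          (1 - (PowerSeries.X : R) ^ m) * b' m =
            ∑ r ∈ Finset.Icc 1 m,
              (PowerSeries.X : R) ^ (m - r) * PowerSeries.C (R := A) (a r) * b' (m - r)) →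
        b' = b) ∧
      -- each `b_m` is weighted homogeneous of degree `m` when `a_r` has degree `r`
      (∀ m k : ℕ,
        MvPolynomial.IsWeightedHomogeneous (fun i => i + 1)
          (PowerSeries.coeff (R := A) k (b m)) m) := by
  refine ⟨InfProdAux.b, ?_, b_zero, b_rec, unit_one_sub_X_pow, ?_, ?_⟩
  · intro m k
    refine ⟨k, fun N hN => ?_⟩
    have : PowerSeries.coeff (R := R) m (∏ n ∈ Finset.range (N + 1), Fser n) = c N m := rfl
    rw [this, ← coeff_b_eq hN]
  · intro b' hb'0 hb'rec
    funext m
    induction m using Nat.strong_induction_on with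
    | _ m ih =>
      rcases eq_or_ne m 0 with rfl | hm
      · rw [hb'0, b_zero]
      · have hm1 : 1 ≤ m := by omega
        have h1 := hb'rec m hm1
        have h2 := b_rec m hm1
        have hsum : (∑ r ∈ Finset.Icc 1 m,
            (PowerSeries.X : R) ^ (m - r) * PowerSeries.C (R := A) (a r) * b' (m - r)) =
            ∑ r ∈ Finset.Icc 1 m,
              (PowerSeries.X : R) ^ (m - r) * PowerSeries.C (R := A) (a r) * InfProdAux.b (m - r) := by
          refine Finset.sum_congr rfl fun r hr => ?_
          obtain ⟨hr1, hrm⟩ := Finset.mem_Icc.mp hr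
          rw [ih (m - r) (by omega)]
        rw [hsum, ← h2] at h1
        exact (unit_one_sub_X_pow m hm1).mul_left_cancel h1
  · intro m k
    rw [coeff_b]
    exact homog k m k
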